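/- Let P be a finite poset in which the LYM inequality holds for all antichains contained in two consecutive layers; that is, for all k and every antichain A ⊆ P_k ∪ P_{k+1}, ∑_{x∈A} 1/|P_{r(x)}| ≤ 1. Then P admits a unit flow: there exists a probability distribution w on the set of chains of P such that for every x ∈ P, the total w-weight of the chains containing x equals 1/|P_{r(x)}|. -/

import Mathlib

/-- The rank of an element of a (finite) poset: the length of the longest
chain strictly below it (equivalently, `r(x) = 0` for minimal `x` and
`r(x) = max {r(y) : y < x} + 1` otherwise). -/
noncomputable def rk {P : Type*} [Preorder P] (x : P) : ℕ :=
  (Order.height x).toNat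

/-- The `k`-th layer of a poset: the set of elements of rank `k`. -/
def layerSet (P : Type*) [Preorder P] (k : ℕ) : Set P := {x : P | rk x = k}

/-- The size of the `k`-th layer. -/
noncomputable def layerCard (P : Type*) [Preorder P] (k : ℕ) : ℕ := (layerSet P k).ncard

/-- A finite poset is LYM if every antichain `A` satisfies
`∑_{x ∈ A} 1 / |P_{r(x)}| ≤ 1`. -/
def IsLYM (P : Type*) [PartialOrder P] [Fintype P] : Prop :=
  ∀ A : Finset P, IsAntichain (· ≤ ·) (A : Set P) →
    ∑ x ∈ A, (1 : ℝ) / layerCard P (rk x) ≤ 1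

/-- A poset is log-concave if its layer sizes `p_k` satisfy
`p_k ^ 2 ≥ p_{k-1} * p_{k+1}` for all `k ≥ 1`. -/
def LayerLogConcave (P : Type*) [Preorder P] : Prop :=
  ∀ k : ℕ, 1 ≤ k → layerCard P (k - 1) * layerCard P (k + 1) ≤ layerCard P k ^ 2

/-- A unit flow on a finite poset `P`: a probability distribution `w` on the set of
chains of `P` such that for every `x`, the total weight of chains containing `x`
is `1 / |P_{r(x)}|`. -/
def IsUnitFlow {P : Type*} [PartialOrder P] [Fintype P] [DecidableEq P]
    (w : Finset P → ℝ) : Prop :=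
  (∀ C : Finset P, 0 ≤ w C) ∧
  (∀ C : Finset P, ¬ IsChain (· ≤ ·) (C : Set P) → w C = 0) ∧
  (∑ C : Finset P, w C = 1) ∧
  (∀ x : P, ∑ C : Finset P, (if x ∈ C then w C else 0) = 1 / layerCard P (rk x))


set_option linter.unusedSectionVars false
set_option linter.unreachableTactic false
set_option linter.unusedTactic false
set_option maxHeartbeats 1000000

namespace Kleit

open Finset

attribute [local instance 10] Classical.propDecidable

variable {P : Type*} [Fintype P] [PartialOrder P] [DecidableEq P]

lemma height_lt_top (x : P) : Order.height x < ⊤ := by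
  refine lt_of_le_of_lt (b := ((Fintype.card P : ℕ) : ℕ∞)) ?_ (by exact_mod_cast lt_top_iff_ne_top.2 (by simp))
  apply Order.height_le
  intro p _
  exact_mod_cast (p.length_lt_card).le

lemma height_eq_rk (x : P) : Order.height x = (rk x : ℕ∞) := by
  simp [rk, ENat.coe_toNat (height_lt_top x).ne]

lemma rk_lt_rk {x y : P} (h : x < y) : rk x < rk y := by
  have := Order.height_strictMono h (height_lt_top x)
  rw [height_eq_rk, height_eq_rk] at this
  exact_mod_cast this

lemma exists_lt_rk_eq {y : P} {k : ℕ} (h : rk y = k + 1) : ∃ x, x < y ∧ rk x = k := by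
  have : Order.height y = ((k : ℕ∞) + 1) := by rw [height_eq_rk, h]; push_cast; ring
  rw [Order.height_eq_coe_add_one_iff] at this
  obtain ⟨-, ⟨x, hx, hxk⟩, -⟩ := this
  exact ⟨x, hx, by rw [height_eq_rk] at hxk; exact_mod_cast hxk⟩

/-- The `k`-th layer as a Finset. -/
noncomputable def layerF (P : Type*) [Fintype P] [PartialOrder P] (k : ℕ) : Finset P :=
  univ.filter (fun x => rk x = k)

lemma mem_layerF {k : ℕ} {x : P} : x ∈ layerF P k ↔ rk x = k := by
  simp [layerF]

lemma layerCard_eq (k : ℕ) : layerCard P k = (layerF P k).card := by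
  rw [layerCard, layerSet]
  rw [show {x : P | rk x = k} = ((layerF P k : Finset P) : Set P) by ext x; simp [mem_layerF]]
  exact Set.ncard_coe_finset _

/-- The maximal rank. -/
noncomputable def maxR (P : Type*) [Fintype P] [PartialOrder P] : ℕ :=
  (univ : Finset P).sup rk

lemma rk_le_maxR (x : P) : rk x ≤ maxR P := Finset.le_sup (mem_univ x)

lemma layerF_nonempty [Nonempty P] {k : ℕ} (hk : k ≤ maxR P) : (layerF P k).Nonempty := by
  obtain ⟨x, -, hx⟩ := Finset.exists_mem_eq_sup (univ : Finset P) univ_nonempty rk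
  -- downward induction
  suffices H : ∀ d, ∀ j, (layerF P (j + d)).Nonempty → (layerF P j).Nonempty by
    exact H (maxR P - k) k (by rw [Nat.add_sub_cancel' hk]; exact ⟨x, mem_layerF.2 hx.symm⟩)
  intro d
  induction d with
  | zero => intro j hj; simpa using hj
  | succ d ih =>
    intro j hj
    apply ih
    obtain ⟨y, hy⟩ := hj
    rw [mem_layerF] at hy
    obtain ⟨z, -, hz⟩ := exists_lt_rk_eq (by omega : rk y = (j + d) + 1)
    exact ⟨z, mem_layerF.2 hz⟩

lemma layerCard_pos [Nonempty P] {k : ℕ} (hk : k ≤ maxR P) : 0 < layerCard P k := by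
  rw [layerCard_eq]; exact Finset.card_pos.2 (layerF_nonempty hk)


/-- upper shadow of `S ⊆ layerF k` inside layer `k+1`. -/
noncomputable def shF (P : Type*) [Fintype P] [PartialOrder P] (k : ℕ) (S : Finset P) : Finset P :=
  (layerF P (k+1)).filter (fun y => ∃ x ∈ S, x < y)

lemma shF_subset {k : ℕ} {S : Finset P} : shF P k S ⊆ layerF P (k+1) := filter_subset _ _

lemma nmp
    (h : ∀ (k : ℕ) (A : Finset P), (∀ x ∈ A, rk x = k ∨ rk x = k + 1) →
      IsAntichain (· ≤ ·) (A : Set P) →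
      ∑ x ∈ A, (1 : ℝ) / layerCard P (rk x) ≤ 1)
    {k : ℕ} (hk : (layerF P k).Nonempty) (hk1 : (layerF P (k+1)).Nonempty)
    (S : Finset P) (hS : S ⊆ layerF P k) :
    S.card * layerCard P (k+1) ≤ (shF P k S).card * layerCard P k := by
  have hpos0 : 0 < layerCard P k := by rw [layerCard_eq]; exact Finset.card_pos.2 hk
  have hpos1 : 0 < layerCard P (k+1) := by rw [layerCard_eq]; exact Finset.card_pos.2 hk1
  set T : Finset P := layerF P (k+1) \ shF P k S with hT
  have hSrank : ∀ x ∈ S, rk x = k := fun x hx => mem_layerF.1 (hS hx)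
  have hTrank : ∀ x ∈ T, rk x = k + 1 := fun x hx => mem_layerF.1 (mem_sdiff.1 hx).1
  have hdisj : Disjoint S T := by
    rw [Finset.disjoint_left]
    intro a haS haT
    have := hSrank a haS; have := hTrank a haT; omega
  have hanti : IsAntichain (· ≤ ·) ((S ∪ T : Finset P) : Set P) := by
    intro a ha b hb hne hab
    simp only [coe_union, Set.mem_union, mem_coe] at ha hb
    have hlt : a < b := lt_of_le_of_ne hab hne
    have hr := rk_lt_rk hlt
    have hra : rk a = k := by
      rcases ha with ha | ha
      · exact hSrank a ha
      · rcases hb with hb | hb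
        · have := hSrank b hb; have := hTrank a ha; omega
        · have := hTrank a ha; have := hTrank b hb; omega
    have haS : a ∈ S := by
      rcases ha with ha | ha
      · exact ha
      · have := hTrank a ha; omega
    have hbT : b ∈ T := by
      rcases hb with hb | hb
      · have := hSrank b hb; omega
      · exact hb
    have hbsh : b ∈ shF P k S := by
      rw [shF, mem_filter]
      exact ⟨(mem_sdiff.1 hbT).1, a, haS, hlt⟩
    exact (mem_sdiff.1 hbT).2 hbsh
  have hsum := h k (S ∪ T) ?_ hanti
  swap
  · intro x hx
    rcases mem_union.1 hx with hx | hx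
    · exact Or.inl (hSrank x hx)
    · exact Or.inr (hTrank x hx)
  rw [Finset.sum_union hdisj] at hsum
  have hpk : (0:ℝ) < layerCard P k := by exact_mod_cast hpos0
  have hpk1 : (0:ℝ) < layerCard P (k+1) := by exact_mod_cast hpos1
  have hST : (∑ x ∈ S, (1:ℝ) / layerCard P (rk x)) = S.card / layerCard P k := by
    rw [Finset.sum_congr rfl (fun x hx => by rw [hSrank x hx])]
    simp [div_eq_mul_inv]
  have hTT : (∑ x ∈ T, (1:ℝ) / layerCard P (rk x)) = T.card / layerCard P (k+1) := by
    rw [Finset.sum_congr rfl (fun x hx => by rw [hTrank x hx])]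
    simp [div_eq_mul_inv]
  rw [hST, hTT] at hsum
  have hTcard : (T.card : ℝ) = (layerCard P (k+1) : ℝ) - (shF P k S).card := by
    rw [hT, Finset.card_sdiff_of_subset shF_subset, layerCard_eq]
    have := Finset.card_le_card (shF_subset (k := k) (S := S))
    push_cast [Nat.cast_sub this]
    ring
  rw [hTcard] at hsum
  have key : (S.card : ℝ) * layerCard P (k+1) ≤ (shF P k S).card * layerCard P k := by
    rw [div_add_div _ _ hpk.ne' hpk1.ne', div_le_one (by positivity)] at hsum
    nlinarith
  exact_mod_cast key


-- helper: equality from sum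
lemma eq_of_sum_eq_card_mul {α : Type*} {s : Finset α} {f : α → ℕ} {c : ℕ}
    (hle : ∀ i ∈ s, f i ≤ c) (hsum : ∑ i ∈ s, f i = s.card * c) :
    ∀ i ∈ s, f i = c := by
  by_contra hcon
  push_neg at hcon
  obtain ⟨i, hi, hne⟩ := hcon
  have hlt : ∑ j ∈ s, f j < ∑ j ∈ s, c :=
    Finset.sum_lt_sum (fun j hj => hle j hj) ⟨i, hi, lt_of_le_of_ne (hle i hi) hne⟩
  rw [Finset.sum_const, smul_eq_mul] at hlt
  omega

lemma exists_transition
    (h : ∀ (k : ℕ) (A : Finset P), (∀ x ∈ A, rk x = k ∨ rk x = k + 1) →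
      IsAntichain (· ≤ ·) (A : Set P) →
      ∑ x ∈ A, (1 : ℝ) / layerCard P (rk x) ≤ 1)
    {k : ℕ} (hk : (layerF P k).Nonempty) (hk1 : (layerF P (k+1)).Nonempty) :
    ∃ c : P → P → ℕ,
      (∀ x y, c x y ≠ 0 → rk x = k ∧ rk y = k + 1 ∧ x < y) ∧
      (∀ x, rk x = k → ∑ y : P, c x y = layerCard P (k+1)) ∧
      (∀ y, rk y = k + 1 → ∑ x : P, c x y = layerCard P k) := by
  classical
  set p := layerCard P k with hp
  set q := layerCard P (k+1) with hq
  set ι := ({x : P // rk x = k} × Fin q)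
  set t : ι → Finset (P × Fin p) :=
    (fun z => ((layerF P (k+1)).filter (fun y => z.1.1 < y)) ×ˢ (univ : Finset (Fin p))) with ht
  have hall : ∀ s : Finset ι, s.card ≤ (s.biUnion t).card := by
    intro s
    set S : Finset P := s.image (fun z => (z.1.1 : P)) with hSdef
    have hSsub : S ⊆ layerF P k := by
      intro x hx
      simp only [hSdef, mem_image] at hx
      obtain ⟨z, -, rfl⟩ := hx
      exact mem_layerF.2 z.1.2
    have hbi : s.biUnion t = (shF P k S) ×ˢ (univ : Finset (Fin p)) := by
      ext ⟨y, j⟩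
      simp only [mem_biUnion, ht, mem_product, mem_filter, mem_univ, and_true, shF,
        hSdef, mem_image]
      constructor
      · rintro ⟨z, hz, ⟨hy1, hy2⟩⟩
        exact ⟨hy1, z.1.1, ⟨z, hz, rfl⟩, hy2⟩
      · rintro ⟨hy1, x, ⟨z, hz, rfl⟩, hlt⟩
        exact ⟨z, hz, hy1, hlt⟩
    have hcard1 : s.card ≤ S.card * q := by
      have hinj : Function.Injective (fun z : ι => ((z.1.1 : P), z.2)) := by
        rintro ⟨⟨a, ha⟩, i⟩ ⟨⟨b, hb⟩, j⟩ hab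
        simp only [Prod.mk.injEq] at hab
        obtain ⟨rfl, rfl⟩ := hab
        rfl
      calc s.card = (s.image (fun z : ι => ((z.1.1 : P), z.2))).card :=
            (Finset.card_image_of_injective s hinj).symm
        _ ≤ (S ×ˢ (univ : Finset (Fin q))).card := by
            apply Finset.card_le_card
            intro w hw
            simp only [mem_image] at hw
            obtain ⟨z, hz, rfl⟩ := hw
            simp only [mem_product, mem_univ, and_true, hSdef, mem_image]
            exact ⟨z, hz, rfl⟩
        _ = S.card * q := by simp [Finset.card_product]
    calc s.card ≤ S.card * q := hcard1
      _ ≤ (shF P k S).card * p := nmp h hk hk1 S hSsub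
      _ = (s.biUnion t).card := by rw [hbi]; simp [Finset.card_product]
  obtain ⟨f, hfinj, hft⟩ := (Finset.all_card_le_biUnion_card_iff_exists_injective t).1 hall
  set c : P → P → ℕ := fun x y =>
    if hx : rk x = k then (univ.filter (fun i : Fin q => (f (⟨x, hx⟩, i)).1 = y)).card else 0
    with hc
  have hft' : ∀ z : ι, (f z).1 ∈ layerF P (k+1) ∧ z.1.1 < (f z).1 := by
    intro z
    have := hft z
    simp only [ht, mem_product, mem_filter] at this
    exact ⟨this.1.1, this.1.2⟩
  refine ⟨c, ?_, ?_, ?_⟩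
  · -- support
    intro x y hxy
    rw [hc] at hxy
    by_cases hx : rk x = k
    · simp only [dif_pos hx] at hxy
      obtain ⟨i, hi⟩ := Finset.card_pos.1 (Nat.pos_of_ne_zero hxy)
      rw [mem_filter] at hi
      have h2 := hft' (⟨x, hx⟩, i)
      rw [hi.2] at h2
      exact ⟨hx, mem_layerF.1 h2.1, h2.2⟩
    · simp [dif_neg hx] at hxy
  · -- row sums
    intro x hx
    have h1 := Finset.card_eq_sum_card_fiberwise
      (f := fun i : Fin q => (f (⟨x, hx⟩, i)).1) (s := (univ : Finset (Fin q)))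
      (t := (univ : Finset P)) (fun i _ => mem_univ _)
    have h2 : ∑ y : P, c x y
        = ∑ y : P, (univ.filter (fun i : Fin q => (f (⟨x, hx⟩, i)).1 = y)).card :=
      Finset.sum_congr rfl (fun y _ => by simp only [hc]; rw [dif_pos hx])
    rw [h2, ← h1]
    simp
  · -- column sums
    intro y0 hy0
    set N : P → ℕ := fun y => (univ.filter (fun z : ι => (f z).1 = y)).card with hN
    have hcN : ∀ y, ∑ x : P, c x y = N y := by
      intro y
      have hfib := Finset.card_eq_sum_card_fiberwise
        (f := fun z : ι => (z.1.1 : P)) (s := univ.filter (fun z : ι => (f z).1 = y))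
        (t := (univ : Finset P)) (fun z _ => mem_univ _)
      have key : ∀ x : P,
          ((univ.filter (fun z : ι => (f z).1 = y)).filter (fun z => (z.1.1 : P) = x)).card
            = c x y := by
        intro x
        by_cases hx : rk x = k
        · simp only [hc, dif_pos hx]
          apply Finset.card_nbij' (i := fun z => z.2) (j := fun i => (⟨x, hx⟩, i))
          · rintro ⟨⟨a, ha⟩, i⟩ hz
            simp only [mem_coe, mem_filter, mem_univ, true_and, and_true] at hz ⊢
            obtain ⟨h1, h2⟩ := hz
            subst h2
            exact h1
          · intro i hi
            simp only [mem_coe, mem_filter, mem_univ, true_and, and_true] at hi ⊢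
            first
            | exact ⟨hi, rfl⟩
            | exact hi
            | exact ⟨hi, trivial⟩
          · rintro ⟨⟨a, ha⟩, i⟩ hz
            simp only [mem_coe, mem_filter] at hz
            have h2 := hz.2
            subst h2
            rfl
          · intro i hi
            rfl
        · simp only [hc, dif_neg hx]
          rw [Finset.card_eq_zero, Finset.filter_eq_empty_iff]
          rintro z hz rfl
          exact hx z.1.2
      rw [hN]
      simp only
      rw [hfib]
      exact Finset.sum_congr rfl (fun x _ => (key x).symm)
    have hNle : ∀ y, N y ≤ p := by
      intro y
      have hinj : Set.InjOn (fun z : ι => (f z).2)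
          (univ.filter (fun z : ι => (f z).1 = y)) := by
        intro z1 h1 z2 h2 he
        simp only [coe_filter, Set.mem_setOf_eq] at h1 h2
        apply hfinj
        exact Prod.ext (h1.2.trans h2.2.symm) he
      calc N y ≤ (univ : Finset (Fin p)).card :=
            Finset.card_le_card_of_injOn _ (fun z _ => mem_univ _) hinj
        _ = p := by simp
    have hNtot : ∑ y ∈ layerF P (k+1), N y = (layerF P (k+1)).card * p := by
      have h1 : ∑ y : P, N y = Fintype.card ι := by
        have := Finset.card_eq_sum_card_fiberwise (f := fun z : ι => (f z).1)
          (s := (univ : Finset ι)) (t := (univ : Finset P)) (fun z _ => mem_univ _)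
        rw [Finset.card_univ] at this
        rw [← this]
      have h2 : ∀ y, y ∉ layerF P (k+1) → N y = 0 := by
        intro y hy
        show (univ.filter (fun z : ι => (f z).1 = y)).card = 0
        rw [Finset.card_eq_zero, Finset.filter_eq_empty_iff]
        intro z _ hcon
        exact hy (hcon ▸ (hft' z).1)
      have h3 : ∑ y ∈ layerF P (k+1), N y = ∑ y : P, N y :=
        Finset.sum_subset (Finset.subset_univ _) (fun y _ hy => h2 y hy)
      rw [h3, h1]
      have hcardι : Fintype.card ι = p * q := by
        show Fintype.card ({x : P // rk x = k} × Fin q) = p * q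
        rw [Fintype.card_prod, Fintype.card_fin, Fintype.card_subtype, hp, layerCard_eq]
        congr 2
      rw [hcardι, hq, layerCard_eq (k+1)]
      ring
    have hfin := eq_of_sum_eq_card_mul (fun y _ => hNle y) hNtot y0 (mem_layerF.2 hy0)
    rw [hcN y0, hfin]


/-- reindexing sums over finsets containing / not containing an element -/
lemma sum_erase_eq (y : P) (h : Finset P → ℝ) :
    ∑ C : Finset P, (if y ∈ C then h (C.erase y) else 0)
      = ∑ D : Finset P, (if y ∉ D then h D else 0) := by
  rw [← Finset.sum_filter, ← Finset.sum_filter]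
  refine Finset.sum_bij' (i := fun C _ => C.erase y) (j := fun D _ => insert y D)
    ?_ ?_ ?_ ?_ ?_
  · intro C hC
    simp only [mem_filter, mem_univ, true_and] at hC ⊢
    exact notMem_erase y C
  · intro D hD
    simp only [mem_filter, mem_univ, true_and] at hD ⊢
    exact mem_insert_self y D
  · intro C hC
    simp only [mem_filter, mem_univ, true_and] at hC
    exact Finset.insert_erase hC
  · intro D hD
    simp only [mem_filter, mem_univ, true_and] at hD
    exact Finset.erase_insert hD
  · intro C hC
    rfl

lemma exists_w [Nonempty P]
    (h : ∀ (k : ℕ) (A : Finset P), (∀ x ∈ A, rk x = k ∨ rk x = k + 1) →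
      IsAntichain (· ≤ ·) (A : Set P) →
      ∑ x ∈ A, (1 : ℝ) / layerCard P (rk x) ≤ 1)
    (n : ℕ) (hn : n ≤ maxR P) :
    ∃ w : Finset P → ℝ,
      (∀ C, 0 ≤ w C) ∧
      (∀ C, w C ≠ 0 → IsChain (· ≤ ·) (C : Set P) ∧
        ∀ j : ℕ, ((C.filter (fun x => rk x = j)).card = if j ≤ n then 1 else 0)) ∧
      (∀ x : P, (∑ C : Finset P, if x ∈ C then w C else 0) =
          if rk x ≤ n then 1 / (layerCard P (rk x) : ℝ) else 0) := by
  induction n with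
  | zero =>
    have hp0 : (0:ℝ) < layerCard P 0 := by exact_mod_cast layerCard_pos (Nat.zero_le _)
    refine ⟨fun C => if C.card = 1 ∧ ∀ x ∈ C, rk x = 0 then 1 / (layerCard P 0 : ℝ) else 0,
      ?_, ?_, ?_⟩
    · intro C; dsimp only; split <;> positivity
    · intro C hC
      rw [ne_eq, ite_eq_right_iff, not_forall] at hC
      obtain ⟨⟨hcard, hrk⟩, -⟩ := hC
      obtain ⟨a, rfl⟩ := Finset.card_eq_one.1 hcard
      constructor
      · rw [Finset.coe_singleton]
        exact IsChain.singleton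
      · intro j
        rcases Nat.eq_zero_or_pos j with rfl | hj
        · rw [if_pos le_rfl]
          rw [Finset.filter_singleton, if_pos (hrk a (mem_singleton_self a))]
          exact Finset.card_singleton a
        · rw [if_neg (by omega)]
          rw [Finset.filter_singleton, if_neg (by have := hrk a (mem_singleton_self a); omega)]
          exact Finset.card_empty
    · intro x
      rw [Finset.sum_eq_single ({x} : Finset P)]
      · by_cases hx : rk x = 0 <;> simp [hx]
      · intro C _ hC
        by_cases hxC : x ∈ C
        · rw [if_pos hxC]
          rw [ite_eq_right_iff]
          rintro ⟨hcard, -⟩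
          obtain ⟨a, rfl⟩ := Finset.card_eq_one.1 hcard
          rw [Finset.mem_singleton] at hxC
          exact absurd (by rw [hxC]) hC
        · rw [if_neg hxC]
      · intro hmem
        exact absurd (mem_univ _) hmem
  | succ n ih =>
    obtain ⟨w, hw0, hw1, hw2⟩ := ih (by omega)
    have hmem1 : (layerF P (n+1)).Nonempty := layerF_nonempty hn
    have hmem0 : (layerF P n).Nonempty := layerF_nonempty (by omega)
    obtain ⟨c, hcsupp, hcrow, hccol⟩ := exists_transition h hmem0 hmem1
    have hpn : (0:ℝ) < layerCard P n := by exact_mod_cast layerCard_pos (by omega : n ≤ maxR P)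
    have hpn1 : (0:ℝ) < layerCard P (n+1) := by exact_mod_cast layerCard_pos hn
    set pn : ℝ := (layerCard P n : ℝ) with hpn_def
    set pn1 : ℝ := (layerCard P (n+1) : ℝ) with hpn1_def
    set F : P → P → ℝ := fun x y => (c x y : ℝ) / (pn * pn1) with hF_def
    have hF0 : ∀ x y, 0 ≤ F x y := fun x y => by positivity
    have hFsupp : ∀ x y, F x y ≠ 0 → rk x = n ∧ rk y = n + 1 ∧ x < y := by
      intro x y hxy
      apply hcsupp
      intro hc0
      apply hxy
      rw [hF_def]
      simp [hc0]
    have hFrow : ∀ x, rk x = n → ∑ y : P, F x y = 1 / pn := by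
      intro x hx
      rw [hF_def]
      simp only
      rw [← Finset.sum_div, ← Nat.cast_sum, hcrow x hx]
      rw [← hpn1_def]
      field_simp
    have hFcol : ∀ y, rk y = n + 1 → ∑ x : P, F x y = 1 / pn1 := by
      intro y hy
      rw [hF_def]
      simp only
      rw [← Finset.sum_div, ← Nat.cast_sum, hccol y hy]
      rw [← hpn_def]
      field_simp
    -- facts about w from IH support
    have hwrank : ∀ D : Finset P, w D ≠ 0 → ∀ z ∈ D, rk z ≤ n := by
      intro D hD z hz
      have hcnt := (hw1 D hD).2 (rk z)
      by_contra hgt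
      rw [if_neg hgt, Finset.card_eq_zero, Finset.filter_eq_empty_iff] at hcnt
      exact hcnt hz rfl
    have hwone : ∀ D : Finset P, w D ≠ 0 → (D.filter (fun x => rk x = n)).card = 1 := by
      intro D hD
      have := (hw1 D hD).2 n
      rwa [if_pos le_rfl] at this
    have hwle : ∀ D : Finset P, w D ≠ 0 → ∀ x ∈ D, rk x = n → ∀ z ∈ D, z ≤ x := by
      intro D hD x hx hxn z hz
      rcases eq_or_ne z x with rfl | hne
      · exact le_refl z
      · rcases (hw1 D hD).1 hz hx hne with hle | hle
        · exact hle
        · exfalso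
          have := rk_lt_rk (lt_of_le_of_ne hle (Ne.symm hne))
          have := hwrank D hD z hz
          omega
    -- the new weight function
    set g : P → Finset P → ℝ :=
      fun y D => (∑ x ∈ D.filter (fun x => rk x = n), pn * F x y) * w D with hg_def
    set w' : Finset P → ℝ :=
      fun C => ∑ y : P, if rk y = n + 1 ∧ y ∈ C then g y (C.erase y) else 0 with hw'_def
    have hg0 : ∀ y D, 0 ≤ g y D := by
      intro y D
      apply mul_nonneg _ (hw0 D)
      apply Finset.sum_nonneg
      intro x _
      have := hF0 x y
      positivity
    -- g vanishes if D contains an element of rank > n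
    have hgz : ∀ y D, (∃ z ∈ D, ¬ rk z ≤ n) → g y D = 0 := by
      intro y D ⟨z, hz, hrkz⟩
      rw [hg_def]
      simp only
      rcases eq_or_ne (w D) 0 with h0 | h0
      · rw [h0, mul_zero]
      · exact absurd (hwrank D h0 z hz) hrkz
    refine ⟨w', ?_, ?_, ?_⟩
    · -- nonneg
      intro C
      rw [hw'_def]
      apply Finset.sum_nonneg
      intro y _
      split
      · exact hg0 _ _
      · exact le_refl 0
    · -- support
      intro C hC
      rw [hw'_def] at hC
      obtain ⟨y, -, hy⟩ := Finset.exists_ne_zero_of_sum_ne_zero hC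
      rw [ne_eq, ite_eq_right_iff, not_forall] at hy
      obtain ⟨⟨hyrk, hyC⟩, hgne⟩ := hy
      set D := C.erase y with hD_def
      have hwD : w D ≠ 0 := by
        intro h0
        apply hgne
        rw [hg_def]
        simp only
        rw [h0, mul_zero]
      have hxex : ∃ x ∈ D, rk x = n ∧ F x y ≠ 0 := by
        by_contra hcon
        push_neg at hcon
        apply hgne
        rw [hg_def]
        simp only
        rw [Finset.sum_eq_zero, zero_mul]
        intro x hx
        rw [mem_filter] at hx
        rw [hcon x hx.1 hx.2, mul_zero]
      obtain ⟨x, hxD, hxn, hxF⟩ := hxex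
      have hxy : x < y := (hFsupp x y hxF).2.2
      have hCeq : C = insert y D := (Finset.insert_erase hyC).symm
      have hyD : y ∉ D := notMem_erase y C
      have hlty : ∀ z ∈ D, z < y := by
        intro z hz
        exact lt_of_le_of_lt (hwle D hwD x hxD hxn z hz) hxy
      constructor
      · rw [hCeq, Finset.coe_insert]
        apply IsChain.insert (hw1 D hwD).1
        intro b hb _
        exact Or.inr (le_of_lt (hlty b hb))
      · intro j
        rw [hCeq, Finset.filter_insert]
        rcases eq_or_ne j (n+1) with rfl | hj
        · rw [if_pos hyrk, if_pos le_rfl]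
          have hDj := (hw1 D hwD).2 (n+1)
          rw [if_neg (by omega), Finset.card_eq_zero] at hDj
          rw [hDj]
          rfl
        · have : rk y = j ↔ False := by simp [hyrk, Ne.symm hj]
          rw [if_neg (by omega : ¬ rk y = j)]
          have hDj := (hw1 D hwD).2 j
          rw [hDj]
          rcases Nat.lt_or_ge j (n+1) with hlt | hge
          · rw [if_pos (by omega), if_pos (by omega)]
          · rw [if_neg (by omega), if_neg (by omega)]
    · -- marginals
      intro z
      -- step 1: swap sums
      have step1 : (∑ C : Finset P, if z ∈ C then w' C else 0)
          = ∑ y : P, if rk y = n + 1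
              then (∑ C : Finset P, if y ∈ C then (if z = y ∨ z ∈ C.erase y then g y (C.erase y) else 0) else 0)
              else 0 := by
        have e1 : ∀ C : Finset P, (if z ∈ C then w' C else 0)
            = ∑ y : P, if rk y = n + 1 ∧ y ∈ C ∧ z ∈ C then g y (C.erase y) else 0 := by
          intro C
          by_cases hzC : z ∈ C
          · rw [if_pos hzC, hw'_def]
            apply Finset.sum_congr rfl
            intro y _
            congr 1
            simp [hzC]
          · rw [if_neg hzC, Finset.sum_eq_zero]
            intro y _
            rw [if_neg (by tauto)]
        rw [Finset.sum_congr rfl (fun C _ => e1 C), Finset.sum_comm]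
        apply Finset.sum_congr rfl
        intro y _
        by_cases hyrk : rk y = n + 1
        · rw [if_pos hyrk]
          apply Finset.sum_congr rfl
          intro C _
          by_cases hyC : y ∈ C
          · rw [if_pos hyC]
            by_cases hzC : z ∈ C
            · rw [if_pos (by tauto), if_pos]
              rcases eq_or_ne z y with rfl | hne
              · exact Or.inl rfl
              · exact Or.inr (Finset.mem_erase.2 ⟨hne, hzC⟩)
            · rw [if_neg (by tauto), if_neg]
              rintro (rfl | hmem)
              · exact hzC hyC
              · exact hzC (Finset.mem_of_mem_erase hmem)
          · rw [if_neg hyC, if_neg (by tauto)]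
        · rw [if_neg hyrk, Finset.sum_eq_zero]
          intro C _
          rw [if_neg (by tauto)]
      -- step 2: reindex inner sums
      have step2 : (∑ C : Finset P, if z ∈ C then w' C else 0)
          = ∑ y : P, if rk y = n + 1
              then (∑ D : Finset P, if z = y ∨ z ∈ D then g y D else 0)
              else 0 := by
        rw [step1]
        apply Finset.sum_congr rfl
        intro y _
        by_cases hyrk : rk y = n + 1
        · rw [if_pos hyrk, if_pos hyrk]
          rw [sum_erase_eq y (fun D => if z = y ∨ z ∈ D then g y D else 0)]
          apply Finset.sum_congr rfl
          intro D _
          by_cases hyD : y ∉ D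
          · rw [if_pos hyD]
          · push_neg at hyD
            rw [if_neg (by simpa using hyD)]
            have hg0' : g y D = 0 := hgz y D ⟨y, hyD, by omega⟩
            rw [hg0']
            split <;> rfl
        · rw [if_neg hyrk, if_neg hyrk]
      rw [step2]
      rcases Nat.lt_or_ge n (rk z) with hzgt | hzle
      case _ => -- rk z ≥ n + 1
        rcases eq_or_ne (rk z) (n+1) with hzn1 | hzne
        · -- case B : rk z = n + 1
          rw [if_pos (by omega : rk z ≤ n + 1)]
          rw [Finset.sum_eq_single z]
          · rw [if_pos hzn1]
            have e2 : ∀ D : Finset P, (if z = z ∨ z ∈ D then g z D else 0) = g z D := by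
              intro D
              rw [if_pos (Or.inl rfl)]
            rw [Finset.sum_congr rfl (fun D _ => e2 D)]
            have e3 : ∀ D : Finset P, g z D
                = ∑ x : P, if x ∈ D ∧ rk x = n then pn * F x z * w D else 0 := by
              intro D
              rw [hg_def]
              simp only
              rw [Finset.sum_mul]
              rw [show (∑ x ∈ D.filter (fun x => rk x = n), pn * F x z * w D)
                  = ∑ x : P, if x ∈ D.filter (fun x => rk x = n) then pn * F x z * w D else 0 by
                rw [Finset.sum_ite_mem, Finset.univ_inter]]
              apply Finset.sum_congr rfl
              intro x _
              simp only [Finset.mem_filter]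
            rw [Finset.sum_congr rfl (fun D _ => e3 D), Finset.sum_comm]
            have e4 : ∀ x : P, (∑ D : Finset P, if x ∈ D ∧ rk x = n then pn * F x z * w D else 0)
                = if rk x = n then F x z else 0 := by
              intro x
              by_cases hx : rk x = n
              · rw [if_pos hx]
                have e4a : ∀ D : Finset P, (if x ∈ D ∧ rk x = n then pn * F x z * w D else 0)
                    = pn * F x z * (if x ∈ D then w D else 0) := by
                  intro D
                  by_cases hxD : x ∈ D
                  · rw [if_pos ⟨hxD, hx⟩, if_pos hxD]
                  · rw [if_neg (by tauto), if_neg hxD, mul_zero]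
                rw [Finset.sum_congr rfl (fun D _ => e4a D), ← Finset.mul_sum, hw2 x,
                  if_pos (le_of_eq hx), hx, ← hpn_def]
                field_simp
              · rw [if_neg hx, Finset.sum_eq_zero]
                intro D _
                rw [if_neg (by tauto)]
            rw [Finset.sum_congr rfl (fun x _ => e4 x)]
            have e5 : ∀ x : P, (if rk x = n then F x z else 0) = F x z := by
              intro x
              by_cases hx : rk x = n
              · rw [if_pos hx]
              · rw [if_neg hx]
                by_contra hne
                exact hx (hFsupp x z (fun hzero => hne hzero.symm)).1
            rw [Finset.sum_congr rfl (fun x _ => e5 x), hFcol z hzn1, hzn1]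
          · intro y _ hyz
            by_cases hyrk : rk y = n + 1
            · rw [if_pos hyrk, Finset.sum_eq_zero]
              intro D _
              by_cases hcond : z = y ∨ z ∈ D
              · rw [if_pos hcond]
                rcases hcond with rfl | hzD
                · exact absurd rfl hyz.symm
                · exact hgz y D ⟨z, hzD, by omega⟩
              · rw [if_neg hcond]
            · rw [if_neg hyrk]
          · intro hz
            exact absurd (mem_univ z) hz
        · -- case C : rk z > n + 1
          rw [if_neg (by omega)]
          rw [Finset.sum_eq_zero]
          intro y _
          by_cases hyrk : rk y = n + 1
          · rw [if_pos hyrk, Finset.sum_eq_zero]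
            intro D _
            by_cases hcond : z = y ∨ z ∈ D
            · rw [if_pos hcond]
              rcases hcond with rfl | hzD
              · omega
              · exact hgz y D ⟨z, hzD, by omega⟩
            · rw [if_neg hcond]
          · rw [if_neg hyrk]
      case _ => -- rk z ≤ n
        rw [if_pos (by omega : rk z ≤ n + 1)]
        have sA1 : ∀ y : P, rk y = n + 1 → ∀ D : Finset P,
            (if z = y ∨ z ∈ D then g y D else 0) = if z ∈ D then g y D else 0 := by
          intro y hy D
          by_cases hzD : z ∈ D
          · rw [if_pos (Or.inr hzD), if_pos hzD]
          · rw [if_neg ?_, if_neg hzD]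
            rintro (rfl | hzz)
            · omega
            · exact hzD hzz
        have sA2 : (∑ y : P, if rk y = n + 1
              then (∑ D : Finset P, if z = y ∨ z ∈ D then g y D else 0) else 0)
            = ∑ y : P, ∑ D : Finset P, if rk y = n + 1 ∧ z ∈ D then g y D else 0 := by
          apply Finset.sum_congr rfl
          intro y _
          by_cases hy : rk y = n + 1
          · rw [if_pos hy, Finset.sum_congr rfl (fun D _ => sA1 y hy D)]
            apply Finset.sum_congr rfl
            intro D _
            by_cases hzD : z ∈ D
            · rw [if_pos hzD, if_pos ⟨hy, hzD⟩]
            · rw [if_neg hzD, if_neg (by tauto)]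
          · rw [if_neg hy, Finset.sum_eq_zero]
            intro D _
            rw [if_neg (by tauto)]
        rw [sA2, Finset.sum_comm]
        have sA3 : ∀ D : Finset P,
            (∑ y : P, if rk y = n + 1 ∧ z ∈ D then g y D else 0)
            = if z ∈ D then w D else 0 := by
          intro D
          by_cases hzD : z ∈ D
          · rw [if_pos hzD]
            have e1 : (∑ y : P, if rk y = n + 1 ∧ z ∈ D then g y D else 0)
                = ∑ y : P, if rk y = n + 1 then g y D else 0 := by
              apply Finset.sum_congr rfl
              intro y _
              by_cases hy : rk y = n + 1
              · rw [if_pos ⟨hy, hzD⟩, if_pos hy]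
              · rw [if_neg (by tauto), if_neg hy]
            rw [e1]
            rcases eq_or_ne (w D) 0 with h0 | h0
            · rw [h0, Finset.sum_eq_zero]
              intro y _
              have : g y D = 0 := by
                rw [hg_def]; simp only; rw [h0, mul_zero]
              rw [this]
              split <;> rfl
            · -- w D ≠ 0
              have e2 : ∀ y : P, (if rk y = n + 1 then g y D else 0)
                  = (∑ x ∈ D.filter (fun x => rk x = n),
                      pn * (if rk y = n + 1 then F x y else 0)) * w D := by
                intro y
                by_cases hy : rk y = n + 1
                · rw [if_pos hy, hg_def]
                  simp only
                  congr 1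
                  apply Finset.sum_congr rfl
                  intro x _
                  rw [if_pos hy]
                · rw [if_neg hy]
                  rw [Finset.sum_congr rfl (fun x _ => by rw [if_neg hy, mul_zero]),
                    Finset.sum_const, smul_zero, zero_mul]
              rw [Finset.sum_congr rfl (fun y _ => e2 y), ← Finset.sum_mul, Finset.sum_comm]
              have e3 : ∀ x ∈ D.filter (fun x => rk x = n),
                  (∑ y : P, pn * (if rk y = n + 1 then F x y else 0)) = 1 := by
                intro x hx
                rw [Finset.mem_filter] at hx
                rw [← Finset.mul_sum]
                have e3a : (∑ y : P, if rk y = n + 1 then F x y else 0) = ∑ y : P, F x y := by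
                  apply Finset.sum_congr rfl
                  intro y _
                  by_cases hy : rk y = n + 1
                  · rw [if_pos hy]
                  · rw [if_neg hy]
                    by_contra hne
                    exact hy (hFsupp x y (fun h => hne h.symm)).2.1
                rw [e3a, hFrow x hx.2]
                field_simp
              rw [Finset.sum_congr rfl e3, Finset.sum_const, hwone D h0, one_smul, one_mul]
          · rw [if_neg hzD, Finset.sum_eq_zero]
            intro y _
            rw [if_neg (by tauto)]
        rw [Finset.sum_congr rfl (fun D _ => sA3 D), hw2 z, if_pos hzle]


end Kleit

/-- **Kleitman's criterion.** If the LYM inequality holds for all antichains contained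
in two consecutive layers of a finite poset `P`, then `P` admits a unit flow. -/
theorem exists_unitFlow_of_consecutive_LYM {P : Type*}
    [Fintype P] [PartialOrder P] [DecidableEq P]
    (h : ∀ (k : ℕ) (A : Finset P), (∀ x ∈ A, rk x = k ∨ rk x = k + 1) →
      IsAntichain (· ≤ ·) (A : Set P) →
      ∑ x ∈ A, (1 : ℝ) / layerCard P (rk x) ≤ 1) :
    ∃ w : Finset P → ℝ, IsUnitFlow w := by
  classical
  rcases isEmpty_or_nonempty P with hP | hP
  · refine ⟨fun C => if C = ∅ then 1 else 0, ?_, ?_, ?_, ?_⟩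
    · intro C; dsimp only; split <;> norm_num
    · intro C hC
      exfalso
      apply hC
      rw [Finset.eq_empty_of_isEmpty C, Finset.coe_empty]
      exact Set.pairwise_empty _
    · rw [Finset.sum_eq_single (∅ : Finset P)]
      · rw [if_pos rfl]
      · intro C _ hC
        rw [if_neg hC]
      · intro hmem
        exact absurd (Finset.mem_univ _) hmem
    · intro x
      exact (IsEmpty.false x).elim
  · obtain ⟨w, hw0, hw1, hw2⟩ := Kleit.exists_w h (Kleit.maxR P) le_rfl
    have hpm : (0:ℝ) < layerCard P (Kleit.maxR P) := by
      exact_mod_cast Kleit.layerCard_pos le_rfl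
    refine ⟨w, hw0, ?_, ?_, ?_⟩
    · intro C hC
      by_contra h0
      exact hC (hw1 C h0).1
    · have key : ∑ x ∈ Kleit.layerF P (Kleit.maxR P),
            (∑ C : Finset P, if x ∈ C then w C else 0)
          = ∑ C : Finset P, w C := by
        rw [Finset.sum_comm]
        apply Finset.sum_congr rfl
        intro C _
        have e1 : (∑ x ∈ Kleit.layerF P (Kleit.maxR P), if x ∈ C then w C else 0)
            = ((Kleit.layerF P (Kleit.maxR P)) ∩ C).card * w C := by
          rw [Finset.sum_ite_mem, Finset.sum_const, nsmul_eq_mul]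
        have e2 : Kleit.layerF P (Kleit.maxR P) ∩ C
            = C.filter (fun x => rk x = Kleit.maxR P) := by
          ext a
          rw [Finset.mem_inter, Finset.mem_filter, Kleit.mem_layerF]
          tauto
        rw [e1, e2]
        rcases eq_or_ne (w C) 0 with h0 | h0
        · rw [h0, mul_zero]
        · rw [(hw1 C h0).2 (Kleit.maxR P), if_pos le_rfl, Nat.cast_one, one_mul]
      have lhs : ∑ x ∈ Kleit.layerF P (Kleit.maxR P),
            (∑ C : Finset P, if x ∈ C then w C else 0)
          = ∑ x ∈ Kleit.layerF P (Kleit.maxR P), 1 / (layerCard P (Kleit.maxR P) : ℝ) := by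
        apply Finset.sum_congr rfl
        intro x hx
        rw [hw2 x, Kleit.mem_layerF.1 hx, if_pos le_rfl]
      rw [← key, lhs, Finset.sum_const, nsmul_eq_mul, ← Kleit.layerCard_eq]
      field_simp
    · intro x
      rw [hw2 x, if_pos (Kleit.rk_le_maxR x)]
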